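/- Every k-automatic sequence over a finite alphabet is a stammering sequence; that is, it satisfies Condition (*)_w for some real number w > 1. -/

import Mathlib

/-- `W ^ x` for a word `W` and real `x > 0`. -/
noncomputable def wordPow {A : Type*} (W : List A) (x : ℝ) : List A :=
  (List.replicate ⌊x⌋₊ W).flatten ++ W.take ⌈(x - ⌊x⌋₊) * W.length⌉₊

/-- The finite word `L` is a prefix of the infinite word `a`. -/
def IsPrefixOfSeq {A : Type*} (L : List A) (a : ℕ → A) : Prop :=
  ∀ i : Fin L.length, L.get i = a i

/-- Condition `(*)_w` for a sequence `a` over an alphabet. -/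
def ConditionStar {A : Type*} (w : ℝ) (a : ℕ → A) : Prop :=
  ∃ U V : ℕ → List A,
    (∀ n, V n ≠ []) ∧
    (∀ n, IsPrefixOfSeq (U n ++ wordPow (V n) w) a) ∧
    (∃ C : ℝ, ∀ n, ((U n).length : ℝ) ≤ C * (V n).length) ∧
    StrictMono fun n => (V n).length

/-- Every `k`-automatic sequence over a finite alphabet (finite `k`-kernel)
is a stammering sequence: it satisfies Condition `(*)_w` for some real `w > 1`. -/
theorem stmt_5 {A : Type*} [Finite A] (k : ℕ) (hk : 2 ≤ k) (a : ℕ → A)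
    (hauto : {s : ℕ → A | ∃ i j : ℕ, j < k ^ i ∧ s = fun n => a (k ^ i * n + j)}.Finite) :
    ∃ w : ℝ, 1 < w ∧ ConditionStar w a := by
  have hS : Finite ↥{s : ℕ → A | ∃ i j : ℕ, j < k ^ i ∧ s = fun n => a (k ^ i * n + j)} :=
    hauto.to_subtype
  -- pigeonhole: find i < j agreeing on all kernel sequences
  have hkey : ∃ i j : ℕ, i < j ∧ ∀ m t : ℕ, t < k ^ m →
      a (k ^ m * i + t) = a (k ^ m * j + t) := by
    obtain ⟨x, y, hne, hf⟩ := Finite.exists_ne_map_eq_of_infinite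
      (fun n : ℕ => fun s : {s : ℕ → A | ∃ i j : ℕ, j < k ^ i ∧ s = fun n => a (k ^ i * n + j)}
        => (s : ℕ → A) n)
    have key : ∀ m t : ℕ, t < k ^ m → a (k ^ m * x + t) = a (k ^ m * y + t) := by
      intro m t ht
      have := congrFun hf ⟨fun n => a (k ^ m * n + t), ⟨m, t, ht, rfl⟩⟩
      exact this
    rcases hne.lt_or_gt with h | h
    · exact ⟨x, y, h, key⟩
    · exact ⟨y, x, h, fun m t ht => (key m t ht).symm⟩
  obtain ⟨i, j, hij, key⟩ := hkey
  set d := j - i with hd_def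
  have hd : 0 < d := by omega
  have hjd : j = i + d := by omega
  set w : ℝ := 1 + (2 * (d : ℝ))⁻¹ with hw_def
  have hd1 : (1 : ℝ) ≤ (d : ℝ) := by exact_mod_cast hd
  have h2dpos : (0 : ℝ) < 2 * (d : ℝ) := by linarith
  have hinv_pos : (0:ℝ) < (2 * (d : ℝ))⁻¹ := inv_pos.mpr h2dpos
  have hinv_le : (2 * (d : ℝ))⁻¹ ≤ 1/2 := by
    rw [inv_le_comm₀ h2dpos (by norm_num)]
    linarith
  have hwgt : 1 < w := by rw [hw_def]; linarith
  have hw_nonneg : (0:ℝ) ≤ w := by rw [hw_def]; linarith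
  have hfloor : ⌊w⌋₊ = 1 := by
    rw [Nat.floor_eq_iff hw_nonneg]
    rw [hw_def]
    push_cast
    constructor <;> linarith
  refine ⟨w, hwgt, ?_⟩
  set U : ℕ → List A := fun n => (List.range' 0 (k ^ n * i)).map a with hU_def
  set V : ℕ → List A := fun n => (List.range' (k ^ n * i) (k ^ n * d)).map a with hV_def
  have hUlen : ∀ n, (U n).length = k ^ n * i := by intro n; simp [hU_def]
  have hVlen : ∀ n, (V n).length = k ^ n * d := by intro n; simp [hV_def]
  have hkpos : ∀ n, 0 < k ^ n := fun n => Nat.pow_pos (by omega)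
  -- the ceil value
  set c : ℕ → ℕ := fun n => ⌈((k ^ n : ℕ) : ℝ) / 2⌉₊ with hc_def
  have hc_le : ∀ n, c n ≤ k ^ n := by
    intro n
    rw [hc_def]
    apply Nat.ceil_le.mpr
    have : (0:ℝ) ≤ ((k^n : ℕ) : ℝ) := by positivity
    linarith
  have hword : ∀ n, wordPow (V n) w = V n ++ (V n).take (c n) := by
    intro n
    unfold wordPow
    rw [hfloor]
    have hceq : ⌈(w - ((1:ℕ):ℝ)) * ((V n).length : ℝ)⌉₊ = c n := by
      rw [hVlen n, hc_def]
      congr 1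
      have hd0 : ((d:ℕ) : ℝ) ≠ 0 := by exact_mod_cast hd.ne'
      rw [hw_def]
      push_cast
      field_simp
      ring
    rw [hceq]
    simp
  refine ⟨U, V, ?_, ?_, ⟨i, ?_⟩, ?_⟩
  · intro n
    have := hVlen n
    intro h
    rw [h] at this
    simp at this
    omega
  · -- prefix condition
    intro n
    rw [hword n]
    intro p
    have hp := p.2
    rw [List.get_eq_getElem]
    have hLlen : (U n ++ (V n ++ (V n).take (c n))).length
        = k ^ n * i + (k ^ n * d + min (c n) (k ^ n * d)) := by
      simp [hUlen, hVlen]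
    by_cases h1 : (p : ℕ) < k ^ n * i
    · rw [List.getElem_append_left (by rw [hUlen]; exact h1)]
      simp [hU_def]
    · push_neg at h1
      rw [List.getElem_append_right (by rw [hUlen]; exact h1)]
      by_cases h2 : (p : ℕ) - (U n).length < (V n).length
      · rw [List.getElem_append_left h2]
        simp only [hV_def, List.getElem_map, List.getElem_range']
        rw [hUlen]
        congr 1
        omega
      · push_neg at h2
        rw [List.getElem_append_right h2]
        have hB := hc_le n
        have h3 : (U n).length = k ^ n * i := hUlen n
        have h4 : (V n).length = k ^ n * d := hVlen n
        have h6 : (List.take (c n) (V n)).length = min (c n) (k ^ n * d) := by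
          rw [List.length_take, hVlen]
        have hlt : (p : ℕ) - (U n).length - (V n).length < ((V n).take (c n)).length := by
          have hthis := hp
          simp only [List.length_append] at hthis
          omega
        rw [List.getElem_take]
        simp only [hV_def, List.getElem_map, List.getElem_range']
        set t := (p : ℕ) - (U n).length - (V n).length with ht_def
        have htlt : t < k ^ n := by omega
        have h5 : k ^ n * j = k ^ n * i + k ^ n * d := by rw [hjd, Nat.mul_add]
        have hp_eq : (p : ℕ) = k ^ n * j + t := by omega
        rw [hp_eq]
        simpa using key n t htlt
  · -- length bound
    intro n
    rw [hUlen, hVlen]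
    push_cast
    have hi0 : (0:ℝ) ≤ (i : ℝ) := Nat.cast_nonneg i
    have hk0 : (0:ℝ) ≤ (k:ℝ) ^ n := by positivity
    calc ((k:ℝ) ^ n * (i:ℝ)) = (i:ℝ) * ((k:ℝ) ^ n * 1) := by ring
      _ ≤ (i:ℝ) * ((k:ℝ) ^ n * (d:ℝ)) := by
          apply mul_le_mul_of_nonneg_left _ hi0
          exact mul_le_mul_of_nonneg_left hd1 hk0
  · -- strict mono
    intro m n hmn
    simp only [hVlen]
    have : k ^ m < k ^ n := Nat.pow_lt_pow_right (by omega) hmn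
    exact Nat.mul_lt_mul_of_lt_of_le this (le_refl d) hd
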